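/- The class of languages recognized by counting automata over P(Σ) is closed under Kleene star: if L_A is recognized by such an automaton, then so is L_A*. -/

import Mathlib

/-- Concatenation of languages. -/
def conc {σ : Type*} (L M : Set (List σ)) : Set (List σ) :=
  {w | ∃ u ∈ L, ∃ v ∈ M, w = u ++ v}

/-- The language of one-letter words with letters from `S ⊆ Σ`. -/
def letters {σ : Type*} (S : Set σ) : Set (List σ) := {w | ∃ x ∈ S, w = [x]}

/-- A counting automaton over `P(Σ)`: states `f₁,…,f_k` (`k ≥ 1`), the first state
being the initial state, transition weight languages `L_{ij} ⊆ Σ`, and final weights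
`{ε}` (final states) or `∅` (non-final states). -/
structure CA (σ : Type*) where
  k : ℕ
  pos : 0 < k
  L : Fin k → Fin k → Set σ
  final : Fin k → Bool

/-- The behavior of each state: `f_i(0)` is the final weight and
`f_i(n+1) = ⋃_j L_{ij}·f_j(n)`. -/
def CA.f {σ : Type*} (A : CA σ) : ℕ → Fin A.k → Set (List σ)
  | 0, i => if A.final i then {([] : List σ)} else ∅
  | n + 1, i => ⋃ j, conc (letters (A.L i j)) (A.f n j)

/-- The language recognized by a counting automaton over `P(Σ)`: `⋃_n f₁(n)`. -/
def CA.lang {σ : Type*} (A : CA σ) : Set (List σ) := ⋃ n, A.f n ⟨0, A.pos⟩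


/-- The Kleene star of a language. -/
def kstar {σ : Type*} (L : Set (List σ)) : Set (List σ) :=
  {w | ∃ l : List (List σ), (∀ u ∈ l, u ∈ L) ∧ w = l.flatten}

namespace StarCA

variable {σ : Type*}

/-- The initial state of `A`. -/
def q0 (A : CA σ) : Fin A.k := ⟨0, A.pos⟩

/-- The zero state as an element of `Fin (A.k + 1)`. -/
def z (A : CA σ) : Fin (A.k + 1) := 0

/-- The old state simulated by a state of the star automaton:
the fresh state `0` simulates `q0 A`, and `i.succ` simulates `i`. -/
def src (A : CA σ) : Fin (A.k + 1) → Fin A.k :=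
  Fin.cases (q0 A) id

/-- The star automaton: a fresh (final) initial state `0`, states `i.succ`
copying state `i` of `A`; edges into `0` are the "jump" edges with weight
`⋃ {L_{im} | m final}`, edges into `j.succ` copy edges into `j`. -/
def star (A : CA σ) : CA σ where
  k := A.k + 1
  pos := Nat.succ_pos _
  L i := Fin.cases (⋃ m, ⋃ (_ : A.final m = true), A.L (src A i) m)
    (fun j' => A.L (src A i) j')
  final := Fin.cases true (fun _ => false)

lemma mem_conc_letters {S : Set σ} {T : Set (List σ)} {w : List σ} :
    w ∈ conc (letters S) T ↔ ∃ x ∈ S, ∃ v ∈ T, w = x :: v := by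
  constructor
  · rintro ⟨u, ⟨x, hx, rfl⟩, v, hv, rfl⟩
    exact ⟨x, hx, v, hv, rfl⟩
  · rintro ⟨x, hx, v, hv, rfl⟩
    exact ⟨[x], ⟨x, hx, rfl⟩, v, hv, rfl⟩

lemma f_succ (A : CA σ) (n : ℕ) (i : Fin A.k) :
    A.f (n + 1) i = ⋃ j, conc (letters (A.L i j)) (A.f n j) := rfl

lemma star_L_zero (A : CA σ) (j : Fin (A.k + 1)) :
    (star A).L (z A) j = (star A).L (Fin.succ (q0 A)) j := by
  induction j using Fin.cases <;> simp [star, src, z]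

lemma star_f_zero_eq (A : CA σ) (n : ℕ) :
    (star A).f (n + 1) (z A) = (star A).f (n + 1) (Fin.succ (q0 A)) := by
  show (⋃ j, conc (letters ((star A).L (z A) j)) ((star A).f n j))
      = ⋃ j, conc (letters ((star A).L (Fin.succ (q0 A)) j)) ((star A).f n j)
  refine Set.iUnion_congr fun j => ?_
  exact congrArg (fun S => conc (letters S) ((star A).f n j)) (star_L_zero A j)

lemma nil_mem_star (A : CA σ) : ([] : List σ) ∈ (star A).f 0 (z A) := by
  show ([] : List σ) ∈ (if (star A).final (z A) then {([] : List σ)} else ∅)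
  simp [star, z]

/-- Soundness of jump edges. -/
lemma fwd (A : CA σ) : ∀ n (i : Fin A.k) (w : List σ),
    w ∈ (star A).f n (Fin.succ i) →
    ∃ a b u v, a + b = n ∧ 1 ≤ a ∧ u ∈ A.f a i ∧
      v ∈ (star A).f b (z A) ∧ w = u ++ v := by
  intro n
  induction n with
  | zero =>
    intro i w hw
    exfalso
    have : w ∈ (if (star A).final (Fin.succ i) then {([] : List σ)} else ∅) := hw
    simp [star] at this
  | succ n ih =>
    intro i w hw
    obtain ⟨j, hj⟩ := Set.mem_iUnion.mp hw
    rw [mem_conc_letters] at hj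
    obtain ⟨x, hx, v, hv, rfl⟩ := hj
    induction j using Fin.cases with
    | zero =>
      -- jump edge: x takes A from i into a final state m
      have hx' : x ∈ ⋃ m, ⋃ (_ : A.final m = true), A.L (src A (Fin.succ i)) m := by
        simpa [star] using hx
      obtain ⟨m, hm, hxm⟩ := by simpa using hx'
      refine ⟨1, n, [x], v, by omega, le_refl 1, ?_, hv, rfl⟩
      rw [f_succ]
      refine Set.mem_iUnion.mpr ⟨m, mem_conc_letters.mpr ⟨x, ?_, [], ?_, rfl⟩⟩
      · simpa [src] using hxm
      · show ([] : List σ) ∈ (if A.final m then {([] : List σ)} else ∅)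
        simp [hm]
    | succ j' =>
      obtain ⟨a, b, u, v', hab, ha, hu, hv', rfl⟩ := ih j' v hv
      refine ⟨a + 1, b, x :: u, v', by omega, by omega, ?_, hv', rfl⟩
      rw [f_succ]
      refine Set.mem_iUnion.mpr ⟨j', mem_conc_letters.mpr ⟨x, ?_, u, hu, rfl⟩⟩
      simpa [star, src] using hx

lemma nil_mem_kstar (L : Set (List σ)) : ([] : List σ) ∈ kstar L :=
  ⟨[], by simp, rfl⟩

lemma append_mem_kstar {L : Set (List σ)} {u v : List σ} (hu : u ∈ L) (hv : v ∈ kstar L) :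
    u ++ v ∈ kstar L := by
  obtain ⟨l, hl, rfl⟩ := hv
  exact ⟨u :: l, fun w hw => by rcases List.mem_cons.mp hw with rfl | hw; exacts [hu, hl w hw], by simp⟩

/-- Words of length a accepted by `A` from state `i` are in `A`'s language when `i = q0`. -/
lemma mem_lang_of_f (A : CA σ) {a : ℕ} {u : List σ} (hu : u ∈ A.f a (q0 A)) :
    u ∈ A.lang :=
  Set.mem_iUnion.mpr ⟨a, hu⟩

/-- Soundness: everything accepted by the star automaton is in `kstar A.lang`. -/
lemma sound (A : CA σ) : ∀ n (w : List σ),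
    w ∈ (star A).f n (z A) → w ∈ kstar A.lang := by
  intro n
  induction n using Nat.strong_induction_on with
  | _ n ih =>
    match n with
    | 0 =>
      intro w hw
      have : w ∈ (if (star A).final (z A) then {([] : List σ)} else ∅) := hw
      simp [star, z] at this
      subst this
      exact nil_mem_kstar _
    | n + 1 =>
      intro w hw
      obtain ⟨j, hj⟩ := Set.mem_iUnion.mp hw
      rw [mem_conc_letters] at hj
      obtain ⟨x, hx, v, hv, rfl⟩ := hj
      induction j using Fin.cases with
      | zero =>
        have hx' : x ∈ ⋃ m, ⋃ (_ : A.final m = true), A.L (src A 0) m := by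
          simpa [star, z] using hx
        obtain ⟨m, hm, hxm⟩ := by simpa using hx'
        have h1 : [x] ∈ A.f 1 (q0 A) := by
          rw [f_succ]
          refine Set.mem_iUnion.mpr ⟨m, mem_conc_letters.mpr ⟨x, ?_, [], ?_, rfl⟩⟩
          · simpa [src] using hxm
          · show ([] : List σ) ∈ (if A.final m then {([] : List σ)} else ∅)
            simp [hm]
        have := append_mem_kstar (mem_lang_of_f A h1) (ih n (by omega) v hv)
        simpa using this
      | succ j' =>
        obtain ⟨a, b, u, v', hab, ha, hu, hv', rfl⟩ := fwd A n j' v hv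
        have hxu : x :: u ∈ A.f (a + 1) (q0 A) := by
          rw [f_succ]
          refine Set.mem_iUnion.mpr ⟨j', mem_conc_letters.mpr ⟨x, ?_, u, hu, rfl⟩⟩
          simpa [star, src, z] using hx
        have hv'' : v' ∈ kstar A.lang := ih b (by omega) v' hv'
        have := append_mem_kstar (mem_lang_of_f A hxu) hv''
        simpa using this

/-- Completeness of jump edges. -/
lemma bwd (A : CA σ) : ∀ a, 1 ≤ a → ∀ (i : Fin A.k) (u : List σ), u ∈ A.f a i →
    ∀ b (v : List σ), v ∈ (star A).f b (z A) →
    u ++ v ∈ (star A).f (a + b) (Fin.succ i) := by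
  intro a
  induction a with
  | zero => omega
  | succ a ih =>
    intro _ i u hu b v hv
    rw [f_succ] at hu
    obtain ⟨j, hj⟩ := Set.mem_iUnion.mp hu
    rw [mem_conc_letters] at hj
    obtain ⟨x, hx, u', hu', rfl⟩ := hj
    match a, hu' with
    | 0, hu' =>
      have hfin : A.final j = true ∧ u' = [] := by
        have : u' ∈ (if A.final j then {([] : List σ)} else ∅) := hu'
        by_cases h : A.final j = true <;> simp [h] at this <;> simp [h, this]
      obtain ⟨hfin, rfl⟩ := hfin
      show x :: v ∈ (star A).f (1 + b) (Fin.succ i)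
      have h1b : 1 + b = b + 1 := by omega
      rw [h1b, f_succ (star A) b (Fin.succ i)]
      refine Set.mem_iUnion.mpr ⟨z A, mem_conc_letters.mpr ⟨x, ?_, v, hv, rfl⟩⟩
      show x ∈ (star A).L (Fin.succ i) (z A)
      simp only [star, z, Fin.cases_zero, Fin.cases_succ, src, id_eq]
      simp only [Set.mem_iUnion]
      exact ⟨j, hfin, hx⟩
    | a' + 1, hu' =>
      have h := ih (by omega) j u' hu' b v hv
      have heq : a' + 1 + 1 + b = (a' + 1 + b) + 1 := by omega
      rw [heq, f_succ (star A) (a' + 1 + b) (Fin.succ i)]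
      refine Set.mem_iUnion.mpr ⟨Fin.succ j, mem_conc_letters.mpr ⟨x, ?_, u' ++ v, h, by simp⟩⟩
      simpa [star, src] using hx

theorem star_lang (A : CA σ) : (star A).lang = kstar A.lang := by
  ext w
  constructor
  · intro hw
    obtain ⟨n, hn⟩ := Set.mem_iUnion.mp hw
    exact sound A n w hn
  · rintro ⟨l, hl, rfl⟩
    induction l with
    | nil =>
      exact Set.mem_iUnion.mpr ⟨0, nil_mem_star A⟩
    | cons u l ihl =>
      have hu : u ∈ A.lang := hl u (by simp)
      have hrest : l.flatten ∈ (star A).lang := ihl (fun x hx => hl x (by simp [hx]))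
      obtain ⟨b, hb⟩ := Set.mem_iUnion.mp hrest
      obtain ⟨a, ha⟩ := Set.mem_iUnion.mp hu
      match a, ha with
      | 0, ha =>
        have : u = [] := by
          have : u ∈ (if A.final (q0 A) then {([] : List σ)} else ∅) := ha
          by_cases h : A.final (q0 A) = true <;> simp [h] at this <;> simp [this]
        simp only [this, List.flatten_cons, List.nil_append]
        exact hrest
      | a' + 1, ha =>
        have h := bwd A (a' + 1) (by omega) (q0 A) u ha b l.flatten hb
        have heq : a' + 1 + b = (a' + b) + 1 := by omega
        rw [heq] at h
        rw [← star_f_zero_eq] at h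
        exact Set.mem_iUnion.mpr ⟨(a' + b) + 1, h⟩

end StarCA

/-- The class of languages recognized by counting automata over `P(Σ)` is closed
under Kleene star. -/
theorem stmt10 {σ : Type*} [Fintype σ] (L₁ : Set (List σ))
    (h₁ : ∃ A : CA σ, A.lang = L₁) :
    ∃ C : CA σ, C.lang = kstar L₁ := by
  obtain ⟨A, rfl⟩ := h₁
  exact ⟨StarCA.star A, StarCA.star_lang A⟩
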